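/- For each j ∈ {1, …, n}, the per-interval error has the closed form Δ_X(I_j) = E_{a_j, μ_j}[μ_j − X] (the partial expectation of μ_j − X over the event {a_j < X ≤ μ_j}), and satisfies Δ_X(I_j) ≤ p_j · (b_j − a_j)/4. -/

import Mathlib

open MeasureTheory

/-- The `j`-th region of the partition of `ℝ` induced by points `q 0 < q 1 < ⋯ < q n`:
`I_0 = (−∞, q 0]`, `I_j = (q (j−1), q j]` for `1 ≤ j ≤ n`, and `I_{n+1} = (q n, ∞)`. -/
noncomputable def seg (q : ℕ → ℝ) (n j : ℕ) : Set ℝ :=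
  if j = 0 then Set.Iic (q 0)
  else if j ≤ n then Set.Ioc (q (j - 1)) (q j)
  else Set.Ioi (q n)

/-- `p_j = P(X ∈ I_j)`. -/
noncomputable def segProb {Ω : Type*} [MeasurableSpace Ω]
    (P : Measure Ω) (X : Ω → ℝ) (q : ℕ → ℝ) (n j : ℕ) : ℝ :=
  (P {ω | X ω ∈ seg q n j}).toReal

/-- `μ_j = E[X | X ∈ I_j] = E[1_{X ∈ I_j} X] / p_j`. -/
noncomputable def segMean {Ω : Type*} [MeasurableSpace Ω]
    (P : Measure Ω) (X : Ω → ℝ) (q : ℕ → ℝ) (n j : ℕ) : ℝ :=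
  (∫ ω in {ω | X ω ∈ seg q n j}, X ω ∂P) / segProb P X q n j

/-- The induced piecewise linear approximation `f̃(s) = ∑_{j=0}^{n+1} p_j · min(s, μ_j)`. -/
noncomputable def ftilde {Ω : Type*} [MeasurableSpace Ω]
    (P : Measure Ω) (X : Ω → ℝ) (q : ℕ → ℝ) (n : ℕ) (s : ℝ) : ℝ :=
  ∑ j ∈ Finset.range (n + 2), segProb P X q n j * min s (segMean P X q n j)

lemma seg_measurable (q : ℕ → ℝ) (n j : ℕ) : MeasurableSet (seg q n j) := by
  unfold seg
  split_ifs <;> measurability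

lemma qmono {q : ℕ → ℝ} {n : ℕ} (hmono : ∀ i < n, q i < q (i + 1)) :
    ∀ i j, i ≤ j → j ≤ n → q i ≤ q j := by
  intro i j hij hjn
  induction j with
  | zero => simp_all
  | succ m ih =>
    rcases Nat.lt_succ_iff_lt_or_eq.mp (Nat.lt_succ_of_le hij) with h | h
    · exact le_trans (ih (Nat.lt_succ_iff.mp h) (le_trans (Nat.le_succ m) hjn))
        (le_of_lt (hmono m (Nat.lt_of_succ_le hjn)))
    · exact le_of_eq (by rw [h])

lemma seg_subset_Iic {q : ℕ → ℝ} {n k : ℕ} (hmono : ∀ i < n, q i < q (i + 1))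
    (hk : k ≤ n) : seg q n k ⊆ Set.Iic (q k) := by
  unfold seg
  split_ifs with h1 h2
  · subst h1; exact le_refl _
  · exact Set.Ioc_subset_Iic_self

lemma seg_subset_Ioi {q : ℕ → ℝ} {n k : ℕ} (hk1 : 1 ≤ k) (hk : k ≤ n + 1) :
    seg q n k ⊆ Set.Ioi (q (k - 1)) := by
  unfold seg
  split_ifs with h1 h2
  · omega
  · exact Set.Ioc_subset_Ioi_self
  · have : k = n + 1 := by omega
    subst this; simp

lemma seg_disjoint {q : ℕ → ℝ} {n : ℕ} (hmono : ∀ i < n, q i < q (i + 1))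
    {k l : ℕ} (hkl : k < l) (hl : l ≤ n + 1) :
    Disjoint (seg q n k) (seg q n l) := by
  have h1 : seg q n k ⊆ Set.Iic (q (l - 1)) := by
    refine (seg_subset_Iic hmono (by omega)).trans ?_
    exact Set.Iic_subset_Iic.mpr (qmono hmono k (l-1) (by omega) (by omega))
  have h2 : seg q n l ⊆ Set.Ioi (q (l - 1)) := seg_subset_Ioi (by omega) hl
  exact Set.disjoint_of_subset h1 h2 (by simp [Set.disjoint_left])

lemma seg_union (q : ℕ → ℝ) (n : ℕ) (x : ℝ) : ∃ k ≤ n + 1, x ∈ seg q n k := by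
  by_cases h0 : x ≤ q 0
  · exact ⟨0, by omega, by simp [seg, h0]⟩
  by_cases hn : q n < x
  · exact ⟨n + 1, le_refl _, by simp [seg, hn]⟩
  push_neg at h0 hn
  have hex : ∃ k, k ≤ n ∧ x ≤ q k := ⟨n, le_refl _, hn⟩
  classical
  set k := Nat.find hex with hkdef
  obtain ⟨hkn, hxk⟩ := Nat.find_spec hex
  have hmin : ∀ m, m < k → ¬ (m ≤ n ∧ x ≤ q m) := fun m hm => Nat.find_min hex hm
  refine ⟨k, by omega, ?_⟩
  have hk1 : 1 ≤ k := by
    rcases Nat.eq_zero_or_pos k with h | h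
    · exfalso; rw [hkdef] at h; rw [h] at hxk; linarith
    · exact h
  have hlt : q (k - 1) < x := by
    by_contra hcon
    push_neg at hcon
    exact hmin (k-1) (by omega) ⟨by omega, hcon⟩
  rw [seg, if_neg (by omega : ¬ k = 0), if_pos hkn]
  exact ⟨hlt, hxk⟩


section Main
variable {Ω : Type*} [MeasurableSpace Ω]
  (P : Measure Ω) [IsProbabilityMeasure P]
  (X : Ω → ℝ)

lemma min_integrable (hX : Integrable X P) (s : ℝ) :
    Integrable (fun ω => min s (X ω)) P := by
  have h := (integrable_const (μ := P) s).inf hX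
  exact h

set_option maxHeartbeats 1000000 in
lemma main {Ω : Type*} [MeasurableSpace Ω]
    (P : Measure Ω) [IsProbabilityMeasure P]
    (X : Ω → ℝ) (hXm : Measurable X) (hX : Integrable X P)
    (n : ℕ)
    (q : ℕ → ℝ)
    (hmono : ∀ i < n, q i < q (i + 1))
    (hpos : ∀ j ≤ n + 1, 0 < segProb P X q n j) :
    ∀ j, 1 ≤ j → j ≤ n →
      (sSup ((fun s => |ftilde P X q n s - ∫ ω, min s (X ω) ∂P|)
              '' Set.Ioc (q (j - 1)) (q j))
          = ∫ ω in {ω | X ω ∈ Set.Ioc (q (j - 1)) (segMean P X q n j)},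
              (segMean P X q n j - X ω) ∂P) ∧
        sSup ((fun s => |ftilde P X q n s - ∫ ω, min s (X ω) ∂P|)
              '' Set.Ioc (q (j - 1)) (q j))
          ≤ segProb P X q n j * (q j - q (j - 1)) / 4 := by
  intro j hj1 hjn
  set E : ℕ → Set Ω := fun k => {ω | X ω ∈ seg q n k} with hE
  have hEm : ∀ k, MeasurableSet (E k) := fun k => hXm (seg_measurable q n k)
  have hpms : ∀ k ≤ n + 1, ∫ ω in E k, X ω ∂P = segProb P X q n k * segMean P X q n k := by
    intro k hk
    rw [segMean]
    field_simp [ne_of_gt (hpos k hk)]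
    rfl
  -- upper bound of the mean
  have hub : ∀ k ≤ n, segMean P X q n k ≤ q k := by
    intro k hk
    have h1 : ∫ ω in E k, X ω ∂P ≤ ∫ ω in E k, (fun _ => q k) ω ∂P :=
      setIntegral_mono_on hX.integrableOn (integrable_const _).integrableOn (hEm k)
        (fun ω hω => seg_subset_Iic hmono hk hω)
    rw [setIntegral_const, smul_eq_mul] at h1
    rw [segMean, div_le_iff₀ (hpos k (by omega))]
    calc ∫ ω in E k, X ω ∂P ≤ (P (E k)).toReal * q k := h1
    _ = q k * segProb P X q n k := by rw [segProb]; ring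
  have hlb : ∀ k, 1 ≤ k → k ≤ n + 1 → q (k - 1) ≤ segMean P X q n k := by
    intro k hk1 hk
    have h1 : ∫ ω in E k, (fun _ => q (k-1)) ω ∂P ≤ ∫ ω in E k, X ω ∂P :=
      setIntegral_mono_on (integrable_const _).integrableOn hX.integrableOn (hEm k)
        (fun ω hω => le_of_lt (seg_subset_Ioi hk1 hk hω))
    rw [setIntegral_const, smul_eq_mul] at h1
    rw [segMean, le_div_iff₀ (hpos k hk)]
    calc q (k-1) * segProb P X q n k = (P (E k)).toReal * q (k-1) := by rw [segProb]; ring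
    _ ≤ ∫ ω in E k, X ω ∂P := h1
  set A := q (j - 1) with hA
  set B := q j with hB
  set μ := segMean P X q n j with hμ
  set p := segProb P X q n j with hp
  have hp0 : 0 < p := hpos j (by omega)
  have hseg_j : seg q n j = Set.Ioc A B := by
    simp only [seg, if_neg (show ¬ j = 0 by omega), if_pos hjn]
    rfl
  have hμB : μ ≤ B := hub j hjn
  have hpEj : (P (E j)).toReal = p := rfl
  have hPE : P (E j) ≠ 0 := by
    intro h
    rw [h] at hpEj
    simp [← hpEj] at hp0
  have hAμ : A < μ := by
    have hnonneg : 0 ≤ᵐ[P.restrict (E j)] fun ω => X ω - A := by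
      filter_upwards [ae_restrict_mem (hEm j)] with ω hω
      have := seg_subset_Ioi hj1 (by omega) hω
      simp only [Set.mem_Ioi] at this
      simp only [Pi.zero_apply]
      linarith
    have hint : IntegrableOn (fun ω => X ω - A) (E j) P :=
      hX.integrableOn.sub (integrable_const _).integrableOn
    have hpos2 : 0 < ∫ ω in E j, (X ω - A) ∂P := by
      rw [setIntegral_pos_iff_support_of_nonneg_ae hnonneg hint]
      have hsub : E j ⊆ Function.support (fun ω => X ω - A) ∩ E j := by
        intro ω hω
        refine ⟨?_, hω⟩
        have := seg_subset_Ioi hj1 (by omega) hω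
        simp only [Set.mem_Ioi] at this
        simp only [Function.mem_support]
        intro h; linarith
      calc (0 : ENNReal) < P (E j) := by
            exact pos_iff_ne_zero.mpr hPE
      _ ≤ P (Function.support (fun ω => X ω - A) ∩ E j) := measure_mono hsub
    rw [integral_sub hX.integrableOn (integrable_const _).integrableOn,
        setIntegral_const, smul_eq_mul, hpms j (by omega)] at hpos2
    rw [measureReal_def, hpEj] at hpos2
    nlinarith [hp0]
  -- integrability of min
  have hIntMin : ∀ s : ℝ, Integrable (fun ω => min s (X ω)) P := min_integrable P X hX
  -- partition of the integral
  have hpart : ∀ f : Ω → ℝ, Integrable f P →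
      ∫ ω, f ω ∂P = ∑ k ∈ Finset.range (n + 2), ∫ ω in E k, f ω ∂P := by
    intro f hf
    have hU : (⋃ k ∈ Finset.range (n + 2), E k) = Set.univ := by
      ext ω
      simp only [Set.mem_iUnion, Finset.mem_range, Set.mem_univ, iff_true]
      obtain ⟨k, hk, hmem⟩ := seg_union q n (X ω)
      exact ⟨k, by omega, hmem⟩
    have hdisj : (↑(Finset.range (n + 2)) : Set ℕ).Pairwise (Function.onFun Disjoint E) := by
      intro k hk l hl hkl
      simp only [Finset.coe_range, Set.mem_Iio] at hk hl
      rcases Nat.lt_or_ge k l with h | h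
      · exact Set.disjoint_of_subset (fun ω hω => hω) (fun ω hω => hω)
          ((seg_disjoint hmono h (by omega)).preimage X)
      · have h' : l < k := by omega
        exact (Set.disjoint_of_subset (fun ω hω => hω) (fun ω hω => hω)
          ((seg_disjoint hmono h' (by omega)).preimage X)).symm
    rw [← setIntegral_univ, ← hU,
      integral_biUnion_finset _ (fun k _ => hEm k) hdisj (fun k _ => hf.integrableOn)]

  -- local error function
  set g : ℝ → ℝ := fun s => p * min s μ - ∫ ω in E j, min s (X ω) ∂P with hgdef
  have hgs : ∀ s, g s = p * min s μ - ∫ ω in E j, min s (X ω) ∂P := fun s => rfl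
  -- Step 1: on (A, B] the difference equals g
  have h1 : ∀ s ∈ Set.Ioc A B, ftilde P X q n s - ∫ ω, min s (X ω) ∂P = g s := by
    intro s hs
    obtain ⟨hsA, hsB⟩ := hs
    rw [ftilde, hpart _ (hIntMin s), ← Finset.sum_sub_distrib, hgs]
    rw [Finset.sum_eq_single_of_mem j (by simp only [Finset.mem_range]; omega)]
    intro k hk hkj
    simp only [Finset.mem_range] at hk
    have hck : (P (E k)).toReal = segProb P X q n k := rfl
    rcases Nat.lt_or_ge k j with hlt | hge
    · have hμk : segMean P X q n k ≤ A :=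
        le_trans (hub k (by omega)) (qmono hmono k (j - 1) (by omega) (by omega))
      have h2 : ∫ ω in E k, min s (X ω) ∂P = ∫ ω in E k, X ω ∂P := by
        refine setIntegral_congr_fun (hEm k) fun ω hω => ?_
        have hx := seg_subset_Iic hmono (by omega) hω
        simp only [Set.mem_Iic] at hx
        have hqk : q k ≤ A := qmono hmono k (j - 1) (by omega) (by omega)
        exact min_eq_right (by linarith)
      rw [h2, hpms k (by omega), min_eq_right (le_trans hμk hsA.le)]
      ring
    · have hkj' : j < k := by omega
      have hμk : B ≤ segMean P X q n k :=
        le_trans (qmono hmono j (k - 1) (by omega) (by omega)) (hlb k (by omega) (by omega))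
      have h2 : ∫ ω in E k, min s (X ω) ∂P = ∫ ω in E k, (fun _ => s) ω ∂P := by
        refine setIntegral_congr_fun (hEm k) fun ω hω => ?_
        have hx := seg_subset_Ioi (by omega) (by omega : k ≤ n + 1) hω
        simp only [Set.mem_Ioi] at hx
        have hqk : B ≤ q (k - 1) := qmono hmono j (k - 1) (by omega) (by omega)
        exact min_eq_left (by linarith)
      rw [h2, setIntegral_const, smul_eq_mul, measureReal_def, hck, min_eq_left (le_trans hsB hμk)]
      ring
  -- Step 2: nonnegativity of g
  have hnn : ∀ s, 0 ≤ g s := by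
    intro s
    have e1 : ∫ ω in E j, min s (X ω) ∂P ≤ p * s := by
      have h := setIntegral_mono_on (hIntMin s).integrableOn
        (integrable_const s).integrableOn (hEm j) (fun ω _ => min_le_left s (X ω))
      rwa [setIntegral_const, smul_eq_mul, measureReal_def, hpEj] at h
    have e2 : ∫ ω in E j, min s (X ω) ∂P ≤ p * μ := by
      have h := setIntegral_mono_on (hIntMin s).integrableOn
        hX.integrableOn (hEm j) (fun ω _ => min_le_right s (X ω))
      rwa [hpms j (by omega)] at h
    rw [hgs]
    rcases le_total s μ with h | h
    · rw [min_eq_left h]; linarith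
    · rw [min_eq_right h]; linarith
  -- Step 3: the maximum is attained at μ
  have h3 : ∀ s, g s ≤ g μ := by
    intro s
    rcases le_total s μ with h | h
    · have key : ∫ ω in E j, (s - min s (X ω)) ∂P ≤ ∫ ω in E j, (μ - min μ (X ω)) ∂P := by
        refine setIntegral_mono_on
          (((integrable_const s).sub (hIntMin s)).integrableOn)
          (((integrable_const μ).sub (hIntMin μ)).integrableOn) (hEm j) (fun ω _ => ?_)
        rcases le_total (X ω) s with hx | hx
        · rw [min_eq_right hx, min_eq_right (le_trans hx h)]; linarith
        · rw [min_eq_left hx]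
          have := min_le_left μ (X ω); linarith
      rw [integral_sub (integrable_const s).integrableOn (hIntMin s).integrableOn,
          integral_sub (integrable_const μ).integrableOn (hIntMin μ).integrableOn,
          setIntegral_const, setIntegral_const, smul_eq_mul, smul_eq_mul, measureReal_def, hpEj] at key
      rw [hgs s, hgs μ, min_eq_left h, min_self]
      linarith
    · have key : ∫ ω in E j, min μ (X ω) ∂P ≤ ∫ ω in E j, min s (X ω) ∂P :=
        setIntegral_mono_on (hIntMin μ).integrableOn (hIntMin s).integrableOn (hEm j)
          (fun ω _ => min_le_min h (le_refl _))
      rw [hgs s, hgs μ, min_eq_right h, min_self]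
      linarith
  -- the sub-level set
  set F : Set Ω := {ω | X ω ∈ Set.Ioc A μ} with hF
  have hFm : MeasurableSet F := hXm measurableSet_Ioc
  have hFsub : F ⊆ E j := by
    intro ω hω
    show X ω ∈ seg q n j
    rw [hseg_j]
    exact ⟨hω.1, le_trans hω.2 hμB⟩
  have hsplit : E j = F ∪ (E j \ F) := (Set.union_diff_cancel hFsub).symm
  have hDm : MeasurableSet (E j \ F) := (hEm j).diff hFm
  have hXB : ∀ ω ∈ E j, A < X ω ∧ X ω ≤ B := by
    intro ω hω
    have : X ω ∈ Set.Ioc A B := by rw [← hseg_j]; exact hω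
    exact ⟨this.1, this.2⟩
  have hDgt : ∀ ω ∈ E j \ F, μ < X ω := by
    intro ω hω
    obtain ⟨hω1, hω2⟩ := hω
    by_contra hcon
    push_neg at hcon
    exact hω2 ⟨(hXB ω hω1).1, hcon⟩
  -- closed form
  have hgmu : g μ = ∫ ω in E j, (μ - min μ (X ω)) ∂P := by
    rw [integral_sub (integrable_const μ).integrableOn (hIntMin μ).integrableOn,
        setIntegral_const, smul_eq_mul, measureReal_def, hpEj, hgs, min_self]
  have hzero : ∫ ω in E j \ F, (μ - min μ (X ω)) ∂P = 0 := by
    rw [setIntegral_congr_fun hDm (fun ω hω => ?_), integral_zero]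
    have := hDgt ω hω
    show μ - min μ (X ω) = (fun _ => (0:ℝ)) ω
    simp only
    rw [min_eq_left (le_of_lt this)]
    ring
  have hclosed : g μ = ∫ ω in F, (μ - X ω) ∂P := by
    calc g μ = ∫ ω in F ∪ (E j \ F), (μ - min μ (X ω)) ∂P := by rw [hgmu, ← hsplit]
    _ = (∫ ω in F, (μ - min μ (X ω)) ∂P) + ∫ ω in E j \ F, (μ - min μ (X ω)) ∂P :=
        setIntegral_union Set.disjoint_sdiff_right hDm
          ((integrable_const μ).sub (hIntMin μ)).integrableOn
          ((integrable_const μ).sub (hIntMin μ)).integrableOn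
    _ = ∫ ω in F, (μ - X ω) ∂P := by
        rw [hzero, add_zero]
        refine setIntegral_congr_fun hFm fun ω hω => ?_
        rw [min_eq_right hω.2]
  -- the bound
  set t := (P F).toReal with ht
  set t' := (P (E j \ F)).toReal with ht'
  have ht0 : 0 ≤ t := ENNReal.toReal_nonneg
  have ht'0 : 0 ≤ t' := ENNReal.toReal_nonneg
  have hts : t + t' = p := by
    rw [ht, ht', ← ENNReal.toReal_add (measure_ne_top P F) (measure_ne_top P (E j \ F)),
        ← measure_union Set.disjoint_sdiff_right hDm, ← hsplit]
    exact hpEj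
  have ub1 : g μ ≤ (μ - A) * t := by
    rw [hclosed]
    have h := setIntegral_mono_on
      (show Integrable (fun ω => μ - X ω) P from (integrable_const μ).sub hX).integrableOn
      (integrable_const (μ - A)).integrableOn hFm
      (fun ω hω => by have : A < X ω := hω.1; linarith)
    rwa [setIntegral_const, smul_eq_mul, mul_comm] at h
  have hEzero : ∫ ω in E j, (μ - X ω) ∂P = 0 := by
    rw [integral_sub (integrable_const μ).integrableOn hX.integrableOn,
        setIntegral_const, smul_eq_mul, measureReal_def, hpEj, hpms j (by omega)]
    ring
  have hsplit2 : (∫ ω in F, (μ - X ω) ∂P) + ∫ ω in E j \ F, (μ - X ω) ∂P = 0 := by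
    rw [← setIntegral_union (f := fun ω => μ - X ω) Set.disjoint_sdiff_right hDm
      (show Integrable (fun ω => μ - X ω) P from (integrable_const μ).sub hX).integrableOn
      (show Integrable (fun ω => μ - X ω) P from (integrable_const μ).sub hX).integrableOn, ← hsplit]
    exact hEzero
  have ub2 : g μ ≤ (B - μ) * t' := by
    have hneg : g μ = ∫ ω in E j \ F, (X ω - μ) ∂P := by
      have : (fun ω => X ω - μ) = fun ω => -(μ - X ω) := funext fun ω => (neg_sub _ _).symm
      rw [this, integral_neg, hclosed]
      linarith [hsplit2]
    rw [hneg]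
    have h := setIntegral_mono_on
      (show Integrable (fun ω => X ω - μ) P from hX.sub (integrable_const μ)).integrableOn
      (integrable_const (B - μ)).integrableOn hDm
      (fun ω hω => by have : X ω ≤ B := (hXB ω hω.1).2; linarith)
    rwa [setIntegral_const, smul_eq_mul, mul_comm] at h
  have hgnn : 0 ≤ g μ := hnn μ
  have hbound : g μ ≤ p * (B - A) / 4 := by
    have key : g μ * g μ ≤ ((μ - A) * t) * ((B - μ) * t') :=
      mul_le_mul ub1 ub2 hgnn (mul_nonneg (by linarith) ht0)
    have e1 : (μ - A) * (B - μ) ≤ (B - A) ^ 2 / 4 := by nlinarith [sq_nonneg (μ - A - (B - μ))]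
    have e2 : t * t' ≤ p ^ 2 / 4 := by nlinarith [sq_nonneg (t - t')]
    have e3 : g μ * g μ ≤ (p * (B - A) / 4) ^ 2 := by
      calc g μ * g μ ≤ ((μ - A) * t) * ((B - μ) * t') := key
      _ = ((μ - A) * (B - μ)) * (t * t') := by ring
      _ ≤ ((B - A) ^ 2 / 4) * (t * t') :=
          mul_le_mul_of_nonneg_right e1 (mul_nonneg ht0 ht'0)
      _ ≤ ((B - A) ^ 2 / 4) * (p ^ 2 / 4) :=
          mul_le_mul_of_nonneg_left e2 (by positivity)
      _ = (p * (B - A) / 4) ^ 2 := by ring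
    have hAB : A < B := lt_of_lt_of_le hAμ hμB
    have hpa : 0 ≤ p * (B - A) / 4 :=
      div_nonneg (mul_nonneg hp0.le (by linarith)) (by norm_num)
    nlinarith [e3, hgnn, hpa]
  -- assembling
  have himg : (fun s => |ftilde P X q n s - ∫ ω, min s (X ω) ∂P|) '' Set.Ioc A B
      = g '' Set.Ioc A B :=
    Set.image_congr fun s hs => by rw [h1 s hs, abs_of_nonneg (hnn s)]
  have hBdd : ∀ x ∈ g '' Set.Ioc A B, x ≤ g μ := by
    rintro x ⟨s, hs, rfl⟩
    exact h3 s
  have hSup : sSup (g '' Set.Ioc A B) = g μ :=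
    le_antisymm (Real.sSup_le hBdd hgnn)
      (le_csSup ⟨g μ, fun x hx => hBdd x hx⟩ ⟨μ, ⟨hAμ, hμB⟩, rfl⟩)
  constructor
  · rw [himg, hSup, hclosed]
  · rw [himg, hSup]
    exact hbound
end Main

/-- For each `j ∈ {1,…,n}`, the per-interval error
`Δ_X(I_j) = sup_{s ∈ I_j} |f̃(s) − f_X(s)|` has the closed form
`Δ_X(I_j) = E_{a_j, μ_j}[μ_j − X]` (partial expectation over `{a_j < X ≤ μ_j}`)
and satisfies `Δ_X(I_j) ≤ p_j (b_j − a_j)/4`. -/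
theorem perInterval_error_closed_form {Ω : Type*} [MeasurableSpace Ω]
    (P : Measure Ω) [IsProbabilityMeasure P]
    (X : Ω → ℝ) (hX : Integrable X P)
    (a b : ℝ) (hab : a < b) (n : ℕ) (hn : 1 ≤ n)
    (q : ℕ → ℝ) (hq0 : q 0 = a) (hqn : q n = b)
    (hmono : ∀ i < n, q i < q (i + 1))
    (hpos : ∀ j ≤ n + 1, 0 < segProb P X q n j) :
    ∀ j, 1 ≤ j → j ≤ n →
      (sSup ((fun s => |ftilde P X q n s - ∫ ω, min s (X ω) ∂P|)
              '' Set.Ioc (q (j - 1)) (q j))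
          = ∫ ω in {ω | X ω ∈ Set.Ioc (q (j - 1)) (segMean P X q n j)},
              (segMean P X q n j - X ω) ∂P) ∧
        sSup ((fun s => |ftilde P X q n s - ∫ ω, min s (X ω) ∂P|)
              '' Set.Ioc (q (j - 1)) (q j))
          ≤ segProb P X q n j * (q j - q (j - 1)) / 4 := by
  classical
  set X' := hX.1.mk X with hX'def
  have hX'm : Measurable X' := hX.1.stronglyMeasurable_mk.measurable
  have hae : X =ᵐ[P] X' := hX.1.ae_eq_mk
  have hX' : Integrable X' P := hX.congr hae
  have hsetae : ∀ S : Set ℝ, {ω | X ω ∈ S} =ᵐ[P] {ω | X' ω ∈ S} := fun S =>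
    hae.mono fun ω hω => by show (X ω ∈ S) = (X' ω ∈ S); rw [hω]
  have hprob : ∀ k, segProb P X q n k = segProb P X' q n k := fun k => by
    rw [segProb, segProb, measure_congr (hsetae _)]
  have hmean : ∀ k, segMean P X q n k = segMean P X' q n k := by
    intro k
    rw [segMean, segMean, hprob, setIntegral_congr_set (hsetae _)]
    congr 1
    exact setIntegral_congr_ae
      (show MeasurableSet {ω | X' ω ∈ seg q n k} from hX'm (seg_measurable q n k))
      (hae.mono fun ω h _ => h)
  have hft : ∀ s, ftilde P X q n s = ftilde P X' q n s := fun s =>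
    Finset.sum_congr rfl fun k _ => by rw [hprob, hmean]
  have hmin : ∀ s, ∫ ω, min s (X ω) ∂P = ∫ ω, min s (X' ω) ∂P := fun s =>
    integral_congr_ae (hae.mono fun ω h => by
      show min s (X ω) = min s (X' ω); rw [h])
  have hpos' : ∀ k ≤ n + 1, 0 < segProb P X' q n k := fun k hk => hprob k ▸ hpos k hk
  intro j hj1 hjn
  obtain ⟨hc, hb⟩ := main P X' hX'm hX' n q hmono hpos' j hj1 hjn
  have himg_eq : (fun s => |ftilde P X q n s - ∫ ω, min s (X ω) ∂P|)
        '' Set.Ioc (q (j - 1)) (q j)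
      = (fun s => |ftilde P X' q n s - ∫ ω, min s (X' ω) ∂P|)
        '' Set.Ioc (q (j - 1)) (q j) :=
    Set.image_congr fun s _ => by rw [hft, hmin]
  have hrhs : ∫ ω in {ω | X ω ∈ Set.Ioc (q (j - 1)) (segMean P X q n j)},
        (segMean P X q n j - X ω) ∂P
      = ∫ ω in {ω | X' ω ∈ Set.Ioc (q (j - 1)) (segMean P X' q n j)},
        (segMean P X' q n j - X' ω) ∂P := by
    rw [hmean j, setIntegral_congr_set (hsetae (Set.Ioc (q (j - 1)) (segMean P X' q n j)))]
    exact setIntegral_congr_ae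
      (show MeasurableSet {ω | X' ω ∈ Set.Ioc (q (j - 1)) (segMean P X' q n j)} from
        hX'm measurableSet_Ioc)
      (hae.mono fun ω h _ => by
        show segMean P X' q n j - X ω = segMean P X' q n j - X' ω; rw [h])
  constructor
  · rw [himg_eq, hrhs]; exact hc
  · rw [himg_eq, hprob j]; exact hb
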